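/- Let p be a strictly positive probability distribution on {1,…,d}, and for r ∈ (0, −log₂ p₁) (with p₁ = max p_i) define E(r) = min over probability distributions q with D(q‖p) ≤ r of D(q‖p) + H(q). Then E(r) = sup_{s ≥ 1} (r + ψ(s))/(1−s), where ψ(s) = log₂ ∑_i p_i^s. -/

import Mathlib

open Real Finset

/-- Gibbs' inequality, natural log version. -/
lemma gibbs_log {d : ℕ} (q m : Fin d → ℝ) (hq : ∀ i, 0 ≤ q i) (hm : ∀ i, 0 < m i)
    (hqs : ∑ i, q i = 1) (hms : ∑ i, m i = 1) :
    0 ≤ ∑ i, q i * Real.log (q i / m i) := by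
  have h : ∀ i, q i - m i ≤ q i * Real.log (q i / m i) := by
    intro i
    rcases eq_or_lt_of_le (hq i) with h0 | h0
    · simp only [← h0, zero_mul, zero_sub]
      linarith [(hm i).le]
    · have h1 := Real.log_le_sub_one_of_pos (div_pos (hm i) h0)
      have hinv : Real.log (m i / q i) = - Real.log (q i / m i) := by
        rw [← Real.log_inv]
        congr 1
        field_simp
      rw [hinv] at h1
      have h2 : 1 - m i / q i ≤ Real.log (q i / m i) := by linarith
      have h3 := mul_le_mul_of_nonneg_left h2 (hq i)
      calc q i - m i = q i * (1 - m i / q i) := by field_simp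
        _ ≤ q i * Real.log (q i / m i) := h3
  calc (0:ℝ) = ∑ i, q i - ∑ i, m i := by rw [hqs, hms]; ring
    _ = ∑ i, (q i - m i) := by rw [Finset.sum_sub_distrib]
    _ ≤ _ := Finset.sum_le_sum fun i _ => h i

/-- Gibbs' inequality, base-2 log version. -/
lemma gibbs_logb {d : ℕ} (q m : Fin d → ℝ) (hq : ∀ i, 0 ≤ q i) (hm : ∀ i, 0 < m i)
    (hqs : ∑ i, q i = 1) (hms : ∑ i, m i = 1) :
    0 ≤ ∑ i, q i * Real.logb 2 (q i / m i) := by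
  have h := gibbs_log q m hq hm hqs hms
  have hc : 0 < Real.log 2 := Real.log_pos (by norm_num)
  have : ∑ i, q i * Real.logb 2 (q i / m i)
      = (∑ i, q i * Real.log (q i / m i)) / Real.log 2 := by
    rw [Finset.sum_div]
    refine Finset.sum_congr rfl fun i _ => ?_
    simp [Real.logb, mul_div_assoc]
  rw [this]
  positivity

/-- The tilting identity: relative entropy w.r.t. the tilted distribution. -/
lemma tilt_id {d : ℕ} (p q : Fin d → ℝ) (hp : ∀ i, 0 < p i) (hq : ∀ i, 0 ≤ q i)
    (hqs : ∑ i, q i = 1) (s : ℝ) (hZ : 0 < ∑ j, p j ^ s) :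
    ∑ i, q i * Real.logb 2 (q i / (p i ^ s / ∑ j, p j ^ s))
      = (∑ i, q i * Real.logb 2 (q i / p i))
        + (s - 1) * (∑ i, q i * (- Real.logb 2 (p i)))
        + Real.logb 2 (∑ j, p j ^ s) := by
  have hterm : ∀ i, q i * Real.logb 2 (q i / (p i ^ s / ∑ j, p j ^ s))
      = q i * Real.logb 2 (q i / p i) + (s - 1) * (q i * (- Real.logb 2 (p i)))
        + q i * Real.logb 2 (∑ j, p j ^ s) := by
    intro i
    rcases eq_or_lt_of_le (hq i) with h0 | h0
    · simp [← h0]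
    · have hps : (0:ℝ) < p i ^ s := Real.rpow_pos_of_pos (hp i) s
      simp only [Real.logb]
      rw [Real.log_div h0.ne' (div_pos hps hZ).ne',
        Real.log_div hps.ne' hZ.ne', Real.log_rpow (hp i),
        Real.log_div h0.ne' (hp i).ne']
      ring
  calc ∑ i, q i * Real.logb 2 (q i / (p i ^ s / ∑ j, p j ^ s))
      = ∑ i, (q i * Real.logb 2 (q i / p i) + (s - 1) * (q i * (- Real.logb 2 (p i)))
          + q i * Real.logb 2 (∑ j, p j ^ s)) := Finset.sum_congr rfl fun i _ => hterm i
    _ = (∑ i, q i * Real.logb 2 (q i / p i))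
        + (s - 1) * (∑ i, q i * (- Real.logb 2 (p i)))
        + (∑ i, q i) * Real.logb 2 (∑ j, p j ^ s) := by
        rw [Finset.sum_add_distrib, Finset.sum_add_distrib, ← Finset.mul_sum,
          ← Finset.sum_mul]
    _ = _ := by rw [hqs]; ring

/-- Value identity: D(q‖p) + H(q) equals the cross entropy. -/
lemma val_eq_cross {d : ℕ} (p q : Fin d → ℝ) (hp : ∀ i, 0 < p i) (hq : ∀ i, 0 ≤ q i) :
    (∑ i, q i * Real.logb 2 (q i / p i)) + (-∑ i, q i * Real.logb 2 (q i))
      = ∑ i, q i * (- Real.logb 2 (p i)) := by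
  rw [← Finset.sum_neg_distrib, ← Finset.sum_add_distrib]
  refine Finset.sum_congr rfl fun i _ => ?_
  rcases eq_or_lt_of_le (hq i) with h0 | h0
  · simp [← h0]
  · rw [Real.logb_div h0.ne' (hp i).ne']
    ring

theorem stmt14 (d : ℕ) (p : Fin d → ℝ) (hpos : ∀ i, 0 < p i) (hsum : ∑ i, p i = 1)
    (p1 : ℝ) (hp1 : IsGreatest (Set.range p) p1)
    (r : ℝ) (hr : r ∈ Set.Ioo 0 (-Real.logb 2 p1)) :
    sInf {x : ℝ | ∃ q : Fin d → ℝ, (∀ i, 0 ≤ q i) ∧ (∑ i, q i = 1) ∧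
        (∑ i, q i * Real.logb 2 (q i / p i)) ≤ r ∧
        x = (∑ i, q i * Real.logb 2 (q i / p i)) + (-∑ i, q i * Real.logb 2 (q i))} =
      sSup {y : ℝ | ∃ s : ℝ, 1 < s ∧
        y = (r + Real.logb 2 (∑ i, p i ^ s)) / (1 - s)} := by
  obtain ⟨hr0, -⟩ := hr
  have hd : Nonempty (Fin d) := by
    rcases Nat.eq_zero_or_pos d with h | h
    · subst h; simp at hsum
    · exact ⟨⟨0, h⟩⟩
  set SL : Set ℝ := {x : ℝ | ∃ q : Fin d → ℝ, (∀ i, 0 ≤ q i) ∧ (∑ i, q i = 1) ∧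
      (∑ i, q i * Real.logb 2 (q i / p i)) ≤ r ∧
      x = (∑ i, q i * Real.logb 2 (q i / p i)) + (-∑ i, q i * Real.logb 2 (q i))} with hSL
  set SR : Set ℝ := {y : ℝ | ∃ s : ℝ, 1 < s ∧
      y = (r + Real.logb 2 (∑ i, p i ^ s)) / (1 - s)} with hSR
  -- basic objects
  set Z : ℝ → ℝ := fun s => ∑ j, p j ^ s with hZdef
  have hZpos : ∀ s, 0 < Z s :=
    fun s => Finset.sum_pos (fun j _ => Real.rpow_pos_of_pos (hpos j) s) univ_nonempty
  set ψ : ℝ → ℝ := fun s => Real.logb 2 (Z s) with hψdef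
  set qs : ℝ → Fin d → ℝ := fun s i => p i ^ s / Z s with hqsdef
  have hqs_pos : ∀ s i, 0 < qs s i :=
    fun s i => div_pos (Real.rpow_pos_of_pos (hpos i) s) (hZpos s)
  have hqs_sum : ∀ s, ∑ i, qs s i = 1 := by
    intro s
    simp only [hqsdef, ← Finset.sum_div]
    exact div_self (hZpos s).ne'
  set C : (Fin d → ℝ) → ℝ := fun q => ∑ i, q i * (- Real.logb 2 (p i)) with hCdef
  set K : (Fin d → ℝ) → ℝ := fun q => ∑ i, q i * Real.logb 2 (q i / p i) with hKdef
  set g : ℝ → ℝ := fun s => K (qs s) with hgdef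
  -- tilting identity specialized
  have htilt : ∀ (q : Fin d → ℝ), (∀ i, 0 ≤ q i) → (∑ i, q i = 1) → ∀ s : ℝ,
      ∑ i, q i * Real.logb 2 (q i / qs s i) = K q + (s - 1) * C q + ψ s :=
    fun q hq hqs1 s => tilt_id p q hpos hq hqs1 s (hZpos s)
  -- g s ≥ 0
  have hg_nonneg : ∀ s, 0 ≤ g s := by
    intro s
    exact gibbs_logb (qs s) p (fun i => (hqs_pos s i).le) hpos (hqs_sum s) hsum
  -- C (qs s) identity, for s ≠ 1
  have hC_qs : ∀ s : ℝ, s ≠ 1 → C (qs s) = (g s + ψ s) / (1 - s) := by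
    intro s hs
    have h0 : ∑ i, qs s i * Real.logb 2 (qs s i / qs s i) = 0 := by
      refine Finset.sum_eq_zero fun i _ => ?_
      rw [div_self (hqs_pos s i).ne']
      simp
    have h1 := htilt (qs s) (fun i => (hqs_pos s i).le) (hqs_sum s) s
    rw [h0] at h1
    have hs1 : (1:ℝ) - s ≠ 0 := by
      intro h; apply hs; linarith
    field_simp
    linarith [h1]
  -- weak duality
  have hweak : ∀ x ∈ SL, ∀ y ∈ SR, y ≤ x := by
    rintro x ⟨q, hq, hq1, hqr, rfl⟩ y ⟨s, hs, rfl⟩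
    have hx : (∑ i, q i * Real.logb 2 (q i / p i)) + (-∑ i, q i * Real.logb 2 (q i)) = C q :=
      val_eq_cross p q hpos hq
    rw [hx]
    have hgib : 0 ≤ ∑ i, q i * Real.logb 2 (q i / qs s i) :=
      gibbs_logb q (qs s) hq (hqs_pos s) hq1 (hqs_sum s)
    rw [htilt q hq hq1 s] at hgib
    have hneg : (1:ℝ) - s < 0 := by linarith
    rw [div_le_iff_of_neg hneg]
    have hKq : K q ≤ r := hqr
    nlinarith [hgib, hKq]
  -- nonemptiness
  have hxL : ∀ s : ℝ, g s ≤ r → C (qs s) ∈ SL := by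
    intro s hgs
    refine ⟨qs s, fun i => (hqs_pos s i).le, hqs_sum s, hgs, ?_⟩
    exact (val_eq_cross p (qs s) hpos (fun i => (hqs_pos s i).le)).symm
  have hneL : SL.Nonempty := by
    have hgp : g 1 = 0 := by
      simp only [hgdef, hKdef, hqsdef, hZdef]
      refine Finset.sum_eq_zero fun i _ => ?_
      rw [Real.rpow_one]
      have hZ1 : ∑ j, p j ^ (1:ℝ) = 1 := by
        simp only [Real.rpow_one]; exact hsum
      rw [hZ1, div_one, div_self (hpos i).ne']
      simp
    exact ⟨C (qs 1), hxL 1 (by rw [hgp]; exact hr0.le)⟩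
  have hneR : SR.Nonempty := ⟨(r + Real.logb 2 (∑ i, p i ^ (2:ℝ))) / (1 - 2), 2, by norm_num, rfl⟩
  obtain ⟨x₀, hx₀⟩ := id hneL
  obtain ⟨y₀, hy₀⟩ := id hneR
  have hbddL : BddBelow SL := ⟨y₀, fun x hx => hweak x hx y₀ hy₀⟩
  have hbddR : BddAbove SR := ⟨x₀, fun y hy => hweak x₀ hx₀ y hy⟩
  -- ≥ direction
  have hge : sSup SR ≤ sInf SL :=
    le_csInf hneL fun x hx => csSup_le hneR fun y hy => hweak x hx y hy
  -- continuity of g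
  have hgcont : Continuous g := by
    have hrc : ∀ i : Fin d, Continuous fun s : ℝ => p i ^ s := by
      intro i
      have : (fun s : ℝ => p i ^ s) = fun s => Real.exp (Real.log (p i) * s) := by
        funext s; rw [Real.rpow_def_of_pos (hpos i)]
      rw [this]
      exact Real.continuous_exp.comp (continuous_const.mul continuous_id)
    have hZc : Continuous Z := continuous_finset_sum _ fun j _ => hrc j
    simp only [hgdef, hKdef, hqsdef]
    apply continuous_finset_sum
    intro i _
    have h1 : Continuous fun s => p i ^ s / Z s :=
      (hrc i).div hZc fun s => (hZpos s).ne'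
    have h2 : Continuous fun s => p i ^ s / Z s / p i := h1.div_const _
    have h3 : Continuous fun s => Real.log (p i ^ s / Z s / p i) :=
      h2.log fun s => (div_pos (hqs_pos s i) (hpos i)).ne'
    exact h1.mul (h3.div_const _)
  have hg1 : g 1 = 0 := by
    simp only [hgdef, hKdef, hqsdef, hZdef]
    refine Finset.sum_eq_zero fun i _ => ?_
    have hZ1 : ∑ j, p j ^ (1:ℝ) = 1 := by
      simp only [Real.rpow_one]; exact hsum
    rw [Real.rpow_one, hZ1, div_one, div_self (hpos i).ne']
    simp
  -- ≤ direction
  have hle : sInf SL ≤ sSup SR := by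
    apply le_of_forall_pos_le_add
    intro ε hε
    set S : ℝ := 1 + r / ε with hSdef
    have hS1 : 1 < S := by
      rw [hSdef]
      have h0 : 0 < r / ε := div_pos hr0 hε
      linarith
    by_cases hcase : g S ≤ r
    · -- feasible tilted dist; gap at most ε
      have hxmem : C (qs S) ∈ SL := hxL S hcase
      have hymem : (r + ψ S) / (1 - S) ∈ SR := ⟨S, hS1, rfl⟩
      have hCeq : C (qs S) = (g S + ψ S) / (1 - S) := hC_qs S (by linarith)
      have hgap : C (qs S) ≤ (r + ψ S) / (1 - S) + ε := by
        rw [hCeq]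
        have hS0 : (0:ℝ) < S - 1 := by linarith
        have hεeq : r / (S - 1) = ε := by
          have hs : S - 1 = r / ε := by rw [hSdef]; ring
          rw [hs]
          field_simp
        have hdiff : (g S + ψ S) / (1 - S) - (r + ψ S) / (1 - S) = (r - g S) / (S - 1) := by
          rw [div_sub_div_same, show g S + ψ S - (r + ψ S) = -(r - g S) by ring,
            show (1:ℝ) - S = -(S - 1) by ring, neg_div_neg_eq]
        have h2 : (r - g S) / (S - 1) ≤ r / (S - 1) := by
          gcongr
          linarith [hg_nonneg S]
        linarith [hdiff, h2, hεeq]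
      calc sInf SL ≤ C (qs S) := csInf_le hbddL hxmem
        _ ≤ (r + ψ S) / (1 - S) + ε := hgap
        _ ≤ sSup SR + ε := add_le_add_left (le_csSup hbddR hymem) ε
    · -- IVT gives exact root
      push_neg at hcase
      have hmem : r ∈ Set.Icc (g 1) (g S) := by
        rw [hg1]; exact ⟨hr0.le, hcase.le⟩
      obtain ⟨t, ht, hgt⟩ := intermediate_value_Icc hS1.le hgcont.continuousOn hmem
      have ht1 : 1 < t := by
        rcases eq_or_lt_of_le ht.1 with h | h
        · exfalso; rw [← h] at hgt; rw [hg1] at hgt; linarith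
        · exact h
      have hxmem : C (qs t) ∈ SL := hxL t (by rw [hgt])
      have hymem : (r + ψ t) / (1 - t) ∈ SR := ⟨t, ht1, rfl⟩
      have hCeq : C (qs t) = (r + ψ t) / (1 - t) := by
        rw [hC_qs t (by linarith), hgt]
      calc sInf SL ≤ C (qs t) := csInf_le hbddL hxmem
        _ = (r + ψ t) / (1 - t) := hCeq
        _ ≤ sSup SR := le_csSup hbddR hymem
        _ ≤ sSup SR + ε := by linarith
  linarith [hge, hle]
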